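/- Let (G, w) be an edge-weighted simple graph on a finite type V and let v ∈ V. Let K = { g ∈ S_G : g(u) = 0 for all u ≠ v }, a ℤ-submodule of S_G. Then S_G is isomorphic as a ℤ-module to the direct sum S_{G_v} ⊕ K, via a splitting of the restriction map g ↦ g|_{V \ {v}}. -/

import Mathlib

/-- An integer spline on the edge-weighted graph `(G, w)`: a vertex labeling `g : V → ℤ` such
that for every edge `{u, x}` of `G`, the weight `w {u, x}` divides `g u - g x` in `ℤ`. -/
def IsSpline {V : Type*} (G : SimpleGraph V) (w : Sym2 V → ℕ) (g : V → ℤ) : Prop :=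
  ∀ u x : V, G.Adj u x → (w s(u, x) : ℤ) ∣ g u - g x

/-- The ℤ-module of integer splines on `(G, w)`, as a submodule of `V → ℤ`. -/
def splineSubmodule {V : Type*} (G : SimpleGraph V) (w : Sym2 V → ℕ) :
    Submodule ℤ (V → ℤ) where
  carrier := {g | IsSpline G w g}
  add_mem' := by
    intro a b ha hb u x hux
    simpa [sub_add_sub_comm] using dvd_add (ha u x hux) (hb u x hux)
  zero_mem' := by intro u x hux; simp
  smul_mem' := by
    intro c g hg u x hux
    simpa [mul_sub] using (hg u x hux).mul_left c

/-- The star-clique operation at `v`: delete `v` and all edges at `v`, and join every pair of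
distinct former neighbors of `v` by an edge (keeping all edges of `G` not incident to `v`). -/
def starClique {V : Type*} (G : SimpleGraph V) (v : V) :
    SimpleGraph {u : V // u ≠ v} where
  Adj u x := u ≠ x ∧ (G.Adj ↑u ↑x ∨ (G.Adj ↑u v ∧ G.Adj ↑x v))
  symm := ⟨by
    rintro u x ⟨h1, h2⟩
    refine ⟨h1.symm, ?_⟩
    rcases h2 with h | ⟨ha, hb⟩
    · exact Or.inl h.symm
    · exact Or.inr ⟨hb, ha⟩⟩
  loopless := ⟨fun u h => h.1 rfl⟩

instance {V : Type*} [DecidableEq V] (G : SimpleGraph V) [DecidableRel G.Adj] (v : V) :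
    DecidableRel (starClique G v).Adj :=
  fun u x => decidable_of_iff (u ≠ x ∧ (G.Adj ↑u ↑x ∨ (G.Adj ↑u v ∧ G.Adj ↑x v))) Iff.rfl

/-- The edge weights of the collapsed graph `(G_v, w_v)`: for distinct `u, x ≠ v`, the weight is
`w {u, x}` if `u, x` are adjacent in `G` but not both adjacent to `v`;
`gcd (w {u, v}) (w {x, v})` if `u, x` are not adjacent in `G` but both adjacent to `v`; and
`lcm (w {u, x}) (gcd (w {u, v}) (w {x, v}))` if both. -/
def collapseWeight {V : Type*} (G : SimpleGraph V) [DecidableRel G.Adj]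
    (w : Sym2 V → ℕ) (v : V) : Sym2 {u : V // u ≠ v} → ℕ :=
  Sym2.lift ⟨fun u x =>
    if G.Adj ↑u ↑x then
      if G.Adj ↑u v ∧ G.Adj ↑x v then
        Nat.lcm (w s(↑u, ↑x)) (Nat.gcd (w s(↑u, v)) (w s(↑x, v)))
      else w s(↑u, ↑x)
    else Nat.gcd (w s(↑u, v)) (w s(↑x, v)),
    by
      intro u x
      have hadj : G.Adj (↑u : V) ↑x ↔ G.Adj (↑x : V) ↑u := G.adj_comm _ _
      have hs : s((↑u : V), (↑x : V)) = s((↑x : V), (↑u : V)) := Sym2.eq_swap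
      have hg : Nat.gcd (w s((↑u : V), v)) (w s((↑x : V), v)) =
          Nat.gcd (w s((↑x : V), v)) (w s((↑u : V), v)) := Nat.gcd_comm _ _
      have ha : (G.Adj (↑u : V) v ∧ G.Adj (↑x : V) v) ↔ (G.Adj (↑x : V) v ∧ G.Adj (↑u : V) v) :=
        and_comm
      dsimp only
      by_cases h1 : G.Adj (↑u : V) ↑x
      · by_cases h2 : G.Adj (↑u : V) v ∧ G.Adj (↑x : V) v
        · rw [if_pos h1, if_pos (hadj.mp h1), if_pos h2, if_pos (ha.mp h2), hs, hg]
        · rw [if_pos h1, if_pos (hadj.mp h1), if_neg h2, if_neg (fun hc => h2 (ha.mpr hc)), hs]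
      · rw [if_neg h1, if_neg (fun hc => h1 (hadj.mpr hc)), hg]⟩

/-- The submodule `K = { g ∈ S_G : g u = 0 for all u ≠ v }` of the spline module. -/
def supportedAtV {V : Type*} (G : SimpleGraph V) (w : Sym2 V → ℕ) (v : V) :
    Submodule ℤ (splineSubmodule G w) where
  carrier := {g | ∀ u : V, u ≠ v → (g : V → ℤ) u = 0}
  add_mem' := by
    intro a b ha hb u hu
    simp [ha u hu, hb u hu]
  zero_mem' := by intro u hu; simp
  smul_mem' := by
    intro c g hg u hu
    simp [hg u hu]


section CRT

variable {ι : Type*}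

lemma natCast_lcm_dvd {a b : ℕ} {d : ℤ} (h1 : (a:ℤ) ∣ d) (h2 : (b:ℤ) ∣ d) :
    ((Nat.lcm a b : ℕ) : ℤ) ∣ d := by
  have := Int.natCast_dvd.mpr (Nat.lcm_dvd (Int.natCast_dvd.mp h1) (Int.natCast_dvd.mp h2))
  simpa [Int.lcm] using this

lemma nat_gcd_lcm_dvd (a b c : ℕ) :
    Nat.gcd a (Nat.lcm b c) ∣ Nat.lcm (Nat.gcd a b) (Nat.gcd a c) := by
  rcases eq_or_ne a 0 with rfl | ha
  · simp
  rcases eq_or_ne b 0 with rfl | hb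
  · simpa using Nat.dvd_lcm_left _ _
  rcases eq_or_ne c 0 with rfl | hc
  · simpa using Nat.dvd_lcm_right _ _
  have hbc : Nat.lcm b c ≠ 0 := Nat.lcm_ne_zero hb hc
  have hab : Nat.gcd a b ≠ 0 := fun h => ha (Nat.gcd_eq_zero_iff.mp h).1
  have hac : Nat.gcd a c ≠ 0 := fun h => ha (Nat.gcd_eq_zero_iff.mp h).1
  have h1 : Nat.gcd a (Nat.lcm b c) ≠ 0 := fun h => ha (Nat.gcd_eq_zero_iff.mp h).1
  have h2 : Nat.lcm (Nat.gcd a b) (Nat.gcd a c) ≠ 0 := Nat.lcm_ne_zero hab hac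
  refine (Nat.factorization_le_iff_dvd h1 h2).mp ?_
  rw [Nat.factorization_gcd ha hbc, Nat.factorization_lcm hb hc,
    Nat.factorization_lcm hab hac, Nat.factorization_gcd ha hb, Nat.factorization_gcd ha hc]
  intro p
  simp only [Finsupp.inf_apply, Finsupp.sup_apply]
  omega

lemma gcd_lcm_finset_dvd [DecidableEq ι] (m : ℕ) (s : Finset ι) (n : ι → ℕ) (d : ℤ)
    (h : ∀ i ∈ s, ((Nat.gcd m (n i) : ℕ) : ℤ) ∣ d) :
    ((Nat.gcd m (s.lcm n) : ℕ) : ℤ) ∣ d := by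
  induction s using Finset.induction_on with
  | empty => simp
  | @insert j s hj ih =>
    have h1 : ((Nat.gcd m (n j) : ℕ) : ℤ) ∣ d := h j (Finset.mem_insert_self _ _)
    have h2 : ((Nat.gcd m (s.lcm n) : ℕ) : ℤ) ∣ d :=
      ih (fun i hi => h i (Finset.mem_insert_of_mem hi))
    have h3 := natCast_lcm_dvd h1 h2
    refine dvd_trans (Int.natCast_dvd_natCast.mpr ?_) h3
    rw [Finset.lcm_insert]
    exact nat_gcd_lcm_dvd m (n j) (s.lcm n)

lemma exists_step (m l : ℕ) (d : ℤ) (h : ((Nat.gcd m l : ℕ) : ℤ) ∣ d) :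
    ∃ t : ℤ, (m:ℤ) ∣ d + t * l := by
  obtain ⟨k, hk⟩ := h
  have hb := Int.gcd_eq_gcd_ab (m:ℤ) (l:ℤ)
  rw [Int.gcd_natCast_natCast] at hb
  refine ⟨-(Int.gcdB m l) * k, ⟨Int.gcdA m l * k, ?_⟩⟩
  rw [hk]
  linear_combination k * hb

lemma crt [DecidableEq ι] (s : Finset ι) (n : ι → ℕ) (a : ι → ℤ)
    (h : ∀ i ∈ s, ∀ j ∈ s, ((Nat.gcd (n i) (n j) : ℕ) : ℤ) ∣ a i - a j) :
    ∃ x : ℤ, ∀ i ∈ s, (n i : ℤ) ∣ x - a i := by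
  induction s using Finset.induction_on with
  | empty => exact ⟨0, by simp⟩
  | @insert j s hj ih =>
    obtain ⟨x, hx⟩ :=
      ih (fun i hi k hk => h i (Finset.mem_insert_of_mem hi) k (Finset.mem_insert_of_mem hk))
    have hgd : ((Nat.gcd (n j) (s.lcm n) : ℕ) : ℤ) ∣ x - a j := by
      apply gcd_lcm_finset_dvd
      intro i hi
      have d1 : ((Nat.gcd (n j) (n i) : ℕ) : ℤ) ∣ x - a i :=
        dvd_trans (Int.natCast_dvd_natCast.mpr (Nat.gcd_dvd_right _ _)) (hx i hi)
      have d2 := h i (Finset.mem_insert_of_mem hi) j (Finset.mem_insert_self _ _)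
      rw [Nat.gcd_comm] at d2
      have := dvd_add d1 d2
      simpa using this
    obtain ⟨t, ht⟩ := exists_step (n j) (s.lcm n) (x - a j) hgd
    refine ⟨x + t * ((s.lcm n : ℕ) : ℤ), ?_⟩
    intro i hi
    rcases Finset.mem_insert.mp hi with rfl | hi
    · convert ht using 1; ring
    · have hL : (n i : ℤ) ∣ ((s.lcm n : ℕ) : ℤ) := Int.natCast_dvd_natCast.mpr (Finset.dvd_lcm hi)
      have : (n i : ℤ) ∣ x - a i + t * ((s.lcm n : ℕ) : ℤ) := dvd_add (hx i hi) (hL.mul_left t)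
      convert this using 1; ring

end CRT
section Graph

variable {V : Type*} [DecidableEq V] (G : SimpleGraph V) [DecidableRel G.Adj]
  (w : Sym2 V → ℕ) (v : V)

lemma collapseWeight_eq (u x : {u : V // u ≠ v}) :
    collapseWeight G w v s(u, x) =
      if G.Adj ↑u ↑x then
        if G.Adj ↑u v ∧ G.Adj ↑x v then
          Nat.lcm (w s(↑u, ↑x)) (Nat.gcd (w s(↑u, v)) (w s(↑x, v)))
        else w s(↑u, ↑x)
      else Nat.gcd (w s(↑u, v)) (w s(↑x, v)) := rfl

lemma restrict_isSpline {g : V → ℤ} (hg : IsSpline G w g) :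
    IsSpline (starClique G v) (collapseWeight G w v) (fun u => g ↑u) := by
  rintro u x ⟨hne, hc⟩
  have key : ∀ p q : V, G.Adj p v → G.Adj q v →
      ((Nat.gcd (w s(p, v)) (w s(q, v)) : ℕ) : ℤ) ∣ g p - g q := by
    intro p q hp hq
    have d1 : ((Nat.gcd (w s(p, v)) (w s(q, v)) : ℕ) : ℤ) ∣ g p - g v :=
      dvd_trans (Int.natCast_dvd_natCast.mpr (Nat.gcd_dvd_left _ _)) (hg p v hp)
    have d2 : ((Nat.gcd (w s(p, v)) (w s(q, v)) : ℕ) : ℤ) ∣ g q - g v :=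
      dvd_trans (Int.natCast_dvd_natCast.mpr (Nat.gcd_dvd_right _ _)) (hg q v hq)
    have := dvd_sub d1 d2
    simpa using this
  rw [collapseWeight_eq]
  by_cases h1 : G.Adj ↑u ↑x
  · by_cases h2 : G.Adj ↑u v ∧ G.Adj ↑x v
    · rw [if_pos h1, if_pos h2]
      exact natCast_lcm_dvd (hg u x h1) (key ↑u ↑x h2.1 h2.2)
    · rw [if_pos h1, if_neg h2]
      exact hg u x h1
  · rw [if_neg h1]
    rcases hc with h | ⟨ha, hb⟩
    · exact absurd h h1
    · exact key ↑u ↑x ha hb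

lemma exists_extension [Fintype V] {h : {u : V // u ≠ v} → ℤ}
    (hh : IsSpline (starClique G v) (collapseWeight G w v) h) :
    ∃ g : V → ℤ, IsSpline G w g ∧ ∀ u : {u : V // u ≠ v}, g ↑u = h u := by
  classical
  set s : Finset {u : V // u ≠ v} := Finset.univ.filter (fun u => G.Adj ↑u v) with hs
  have hmem : ∀ u : {u : V // u ≠ v}, u ∈ s ↔ G.Adj ↑u v := by
    intro u; simp [hs]
  have hweight : ∀ i j : {u : V // u ≠ v}, G.Adj ↑i v → G.Adj ↑j v → i ≠ j →
      ((Nat.gcd (w s(↑i, v)) (w s(↑j, v)) : ℕ) : ℤ) ∣ h i - h j := by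
    intro i j hi hj hij
    have hadj : (starClique G v).Adj i j := ⟨hij, Or.inr ⟨hi, hj⟩⟩
    have hd := hh i j hadj
    rw [collapseWeight_eq] at hd
    by_cases h1 : G.Adj ↑i ↑j
    · rw [if_pos h1, if_pos ⟨hi, hj⟩] at hd
      exact dvd_trans (Int.natCast_dvd_natCast.mpr (Nat.dvd_lcm_right _ _)) hd
    · rw [if_neg h1] at hd
      exact hd
  have hcompat : ∀ i ∈ s, ∀ j ∈ s,
      ((Nat.gcd (w s(↑i, v)) (w s(↑j, v)) : ℕ) : ℤ) ∣ h i - h j := by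
    intro i hi j hj
    by_cases hij : i = j
    · subst hij; simp
    · exact hweight i j ((hmem i).mp hi) ((hmem j).mp hj) hij
  obtain ⟨x, hx⟩ := crt s (fun u => w s(↑u, v)) (fun u => h u) hcompat
  refine ⟨fun u => if hu : u = v then x else h ⟨u, hu⟩, ?_, ?_⟩
  · intro p q hpq
    by_cases hp : p = v
    · subst hp
      have hq : q ≠ p := hpq.ne'
      beta_reduce
      rw [dif_pos rfl, dif_neg hq]
      have hqs : (⟨q, hq⟩ : {u : V // u ≠ p}) ∈ s := (hmem _).mpr hpq.symm
      have := hx _ hqs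
      rw [Sym2.eq_swap] at this
      exact this
    · by_cases hq : q = v
      · subst hq
        beta_reduce
        rw [dif_pos rfl, dif_neg hp]
        have hps : (⟨p, hp⟩ : {u : V // u ≠ q}) ∈ s := (hmem _).mpr hpq
        have := hx _ hps
        rw [dvd_sub_comm]
        exact this
      · beta_reduce
        rw [dif_neg hp, dif_neg hq]
        have hadj : (starClique G v).Adj ⟨p, hp⟩ ⟨q, hq⟩ :=
          ⟨by simpa [Subtype.ext_iff] using hpq.ne, Or.inl hpq⟩
        have hd := hh _ _ hadj
        rw [collapseWeight_eq] at hd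
        simp only at hd
        rw [if_pos hpq] at hd
        by_cases h2 : G.Adj p v ∧ G.Adj q v
        · rw [if_pos h2] at hd
          exact dvd_trans (Int.natCast_dvd_natCast.mpr (Nat.dvd_lcm_left _ _)) hd
        · rw [if_neg h2] at hd
          exact hd
  · intro u
    exact dif_neg u.2

end Graph
/-- `S_G ≅ S_{G_v} ⊕ K` as ℤ-modules, via a splitting of the restriction map
`g ↦ g|_{V \ {v}}`: there is a ℤ-module isomorphism whose first component is restriction. -/
theorem spline_module_direct_sum {V : Type*} [Fintype V] [DecidableEq V]
    (G : SimpleGraph V) [DecidableRel G.Adj] (w : Sym2 V → ℕ)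
    (hw : ∀ e ∈ G.edgeSet, 0 < w e) (v : V) :
    ∃ e : splineSubmodule G w ≃ₗ[ℤ]
        (splineSubmodule (starClique G v) (collapseWeight G w v) × supportedAtV G w v),
      ∀ g : splineSubmodule G w, ∀ u : {u : V // u ≠ v},
        (((e g).1 : {u : V // u ≠ v} → ℤ) u) = (g : V → ℤ) ↑u := by
  classical
  let r : splineSubmodule G w →ₗ[ℤ] splineSubmodule (starClique G v) (collapseWeight G w v) :=
    { toFun := fun g => ⟨fun u => (g : V → ℤ) ↑u, restrict_isSpline G w v g.2⟩
      map_add' := fun a b => rfl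
      map_smul' := fun c a => rfl }
  have hr : Function.Surjective r := by
    intro h
    obtain ⟨g, hg, hgu⟩ := exists_extension G w v h.2
    exact ⟨⟨g, hg⟩, Subtype.ext (funext hgu)⟩
  have hfree : Module.Free ℤ (splineSubmodule (starClique G v) (collapseWeight G w v)) :=
    Module.Free.of_basis (Submodule.basisOfPid (Pi.basisFun ℤ {u : V // u ≠ v}) _).2
  have hproj : Module.Projective ℤ (splineSubmodule (starClique G v) (collapseWeight G w v)) :=
    Module.Projective.of_free
  obtain ⟨σ, hσ⟩ := Module.projective_lifting_property r LinearMap.id hr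
  let q : splineSubmodule G w →ₗ[ℤ] splineSubmodule G w := LinearMap.id - σ ∘ₗ r
  have hrq : ∀ g, r (q g) = 0 := by
    intro g
    have h1 : r (σ (r g)) = r g := DFunLike.congr_fun hσ (r g)
    simp [q, h1]
  have hq : ∀ g, q g ∈ supportedAtV G w v := by
    intro g u hu
    have h0 := hrq g
    have h1 := congrFun (congrArg (fun z => ((z : splineSubmodule (starClique G v)
      (collapseWeight G w v)) : {u : V // u ≠ v} → ℤ)) h0) ⟨u, hu⟩
    exact h1
  let e' : splineSubmodule G w →ₗ[ℤ]
      (splineSubmodule (starClique G v) (collapseWeight G w v) × supportedAtV G w v) :=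
    LinearMap.prod r (LinearMap.codRestrict (supportedAtV G w v) q hq)
  let inv : (splineSubmodule (starClique G v) (collapseWeight G w v) × supportedAtV G w v)
      →ₗ[ℤ] splineSubmodule G w :=
    LinearMap.coprod σ (supportedAtV G w v).subtype
  have h2 : inv ∘ₗ e' = LinearMap.id := by
    apply LinearMap.ext; intro g
    simp [inv, e', q]
  have h1 : e' ∘ₗ inv = LinearMap.id := by
    apply LinearMap.ext; rintro ⟨h, k⟩
    have hrk : r ↑k = 0 := Subtype.ext (funext fun u => k.2 ↑u u.2)
    have hrσ : r (σ h) = h := DFunLike.congr_fun hσ h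
    apply Prod.ext
    · simp [e', inv, hrk, hrσ]
    · apply Subtype.ext
      simp [e', inv, q, hrk, hrσ]
  exact ⟨LinearEquiv.ofLinear e' inv h1 h2, fun g u => rfl⟩
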